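/- Let K be a set of (possibly nonfinite) Borel measures on [0,∞). Then the identity [0,∞) → [0,∞), s ↦ s, is uniformly integrable for K if and only if there exists a nondecreasing function ψ : [0,∞) → [0,∞) with ψ(0) = 0 such that the map s ↦ ψ(s)/s is nondecreasing on (0,∞), ψ(s)/s → ∞ as s → ∞, and sup_{ν∈K} ∫₀^∞ ψ(s) dν(s) < ∞. -/

import Mathlib

open MeasureTheory Filter Set Topology NNReal ENNReal

/-- **Statement 3.** For a set `K` of (possibly nonfinite) Borel measures on `[0,∞)`, the
identity `s ↦ s` is uniformly integrable for `K`, i.e.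
`sup_{ν∈K} ∫_{(M,∞)} s dν(s) → 0` as `M → ∞`, if and only if there is a nondecreasing
`ψ : [0,∞) → [0,∞)` with `ψ(0)=0` such that `s ↦ ψ(s)/s` is nondecreasing on `(0,∞)`,
`ψ(s)/s → ∞` as `s → ∞`, and `sup_{ν∈K} ∫ ψ dν < ∞`. -/
theorem stmt_3 (K : Set (Measure ℝ≥0)) :
    Tendsto (fun M : ℝ≥0 => ⨆ ν ∈ K, ∫⁻ s in Ioi M, (s : ℝ≥0∞) ∂ν) atTop (𝓝 0) ↔
      ∃ ψ : ℝ≥0 → ℝ≥0, Monotone ψ ∧ ψ 0 = 0 ∧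
        MonotoneOn (fun s => ψ s / s) (Ioi 0) ∧
        Tendsto (fun s => ψ s / s) atTop atTop ∧
        (⨆ ν ∈ K, ∫⁻ s, (ψ s : ℝ≥0∞) ∂ν) < ⊤ := by
  constructor
  · intro h
    have hMex : ∀ n : ℕ, ∃ a : ℝ≥0, ∀ M : ℝ≥0, a ≤ M →
        (⨆ ν ∈ K, ∫⁻ s in Ioi M, (s : ℝ≥0∞) ∂ν) ≤ (2⁻¹ : ℝ≥0∞) ^ n := by
      intro n
      have hpos : (0:ℝ≥0∞) < 2⁻¹ ^ n :=
        ENNReal.pow_pos (ENNReal.inv_pos.mpr (by norm_num)) n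
      rcases eventually_atTop.mp (h.eventually_lt_const hpos) with ⟨a, ha⟩
      exact ⟨a, fun M hMa => (ha M hMa).le⟩
    choose a ha using hMex
    set M : ℕ → ℝ≥0 := fun n => max (a n) (n : ℝ≥0) with hMdef
    have hMn : ∀ n : ℕ, (n:ℝ≥0) ≤ M n := fun n => le_max_right _ _
    have hMa : ∀ n, (⨆ ν ∈ K, ∫⁻ s in Ioi (M n), (s : ℝ≥0∞) ∂ν) ≤ (2⁻¹:ℝ≥0∞) ^ n :=
      fun n => ha n _ (le_max_left _ _)
    set F : ℝ≥0 → Finset ℕ :=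
      fun s => (Finset.range ⌈(s:ℝ≥0)⌉₊).filter (fun n => M n < s) with hF
    set φ : ℝ≥0 → ℕ := fun s => (F s).card with hφ
    have hFmono : ∀ ⦃s t : ℝ≥0⦄, s ≤ t → F s ⊆ F t := by
      intro s t hst n hn
      simp only [hF, Finset.mem_filter, Finset.mem_range] at hn ⊢
      exact ⟨lt_of_lt_of_le hn.1 (Nat.ceil_mono hst), lt_of_lt_of_le hn.2 hst⟩
    have hφmono : Monotone φ := fun s t hst => Finset.card_le_card (hFmono hst)
    refine ⟨fun s => s * φ s, ?_, by simp, ?_, ?_, ?_⟩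
    · intro s t hst
      exact mul_le_mul' hst (by exact_mod_cast hφmono hst)
    · intro s hs t ht hst
      simp only
      rw [mul_div_cancel_left₀ _ (ne_of_gt (mem_Ioi.mp hs)),
        mul_div_cancel_left₀ _ (ne_of_gt (mem_Ioi.mp ht))]
      exact_mod_cast hφmono hst
    · rw [tendsto_atTop]
      intro b
      set N := ⌈b⌉₊ with hN
      set L := (Finset.range (N+1)).sup M + 1 with hL
      filter_upwards [eventually_ge_atTop L] with s hsL
      have hs0 : (0:ℝ≥0) < s :=
        lt_of_lt_of_le (lt_of_lt_of_le zero_lt_one le_add_self) hsL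
      have hsub : Finset.range (N+1) ⊆ F s := by
        intro n hn
        have h1 : M n < s :=
          lt_of_lt_of_le (lt_of_le_of_lt (Finset.le_sup hn) (lt_add_one _)) hsL
        exact Finset.mem_filter.mpr
          ⟨Finset.mem_range.mpr (Nat.lt_ceil.mpr (lt_of_le_of_lt (hMn n) h1)), h1⟩
      have hcard : N + 1 ≤ φ s := by
        have := Finset.card_le_card hsub
        simpa using this
      rw [mul_div_cancel_left₀ _ (ne_of_gt hs0)]
      calc b ≤ (N : ℝ≥0) := Nat.le_ceil b
        _ ≤ (φ s : ℝ≥0) := by exact_mod_cast le_trans (Nat.le_succ N) hcard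
    · have hpt : ∀ s : ℝ≥0, ((s * (φ s : ℝ≥0) : ℝ≥0) : ℝ≥0∞)
          = ∑' n : ℕ, (Ioi (M n)).indicator (fun u : ℝ≥0 => (u:ℝ≥0∞)) s := by
        intro s
        rw [tsum_eq_sum (s := F s) (fun n hn => by
          apply indicator_of_notMem
          intro hmem
          rw [mem_Ioi] at hmem
          exact hn (Finset.mem_filter.mpr
            ⟨Finset.mem_range.mpr (Nat.lt_ceil.mpr (lt_of_le_of_lt (hMn n) hmem)), hmem⟩))]
        have : ∀ n ∈ F s, (Ioi (M n)).indicator (fun u : ℝ≥0 => (u:ℝ≥0∞)) s = (s:ℝ≥0∞) := by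
          intro n hn
          exact indicator_of_mem (mem_Ioi.mpr (Finset.mem_filter.mp hn).2) _
        rw [Finset.sum_congr rfl this, Finset.sum_const]
        push_cast
        rw [nsmul_eq_mul, mul_comm]
      have hle : (⨆ ν ∈ K, ∫⁻ s, (((fun s => s * (φ s : ℝ≥0)) s : ℝ≥0) : ℝ≥0∞) ∂ν)
          ≤ ∑' n : ℕ, (2⁻¹:ℝ≥0∞) ^ n := by
        refine iSup₂_le fun ν hν => ?_
        calc ∫⁻ s, ((s * (φ s : ℝ≥0) : ℝ≥0) : ℝ≥0∞) ∂ν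
            = ∑' n : ℕ, ∫⁻ s in Ioi (M n), (s:ℝ≥0∞) ∂ν := by
              simp_rw [hpt]
              rw [lintegral_tsum (fun n =>
                (ENNReal.continuous_coe.measurable.indicator measurableSet_Ioi).aemeasurable)]
              congr 1
              funext n
              rw [lintegral_indicator measurableSet_Ioi]
          _ ≤ ∑' n : ℕ, (2⁻¹:ℝ≥0∞) ^ n := by
              refine ENNReal.tsum_le_tsum fun n => ?_
              refine le_trans ?_ (hMa n)
              exact le_iSup₂ (f := fun (ν : Measure ℝ≥0) (_ : ν ∈ K) =>
                ∫⁻ s in Ioi (M n), (s:ℝ≥0∞) ∂ν) ν hν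
      refine lt_of_le_of_lt hle ?_
      rw [ENNReal.tsum_geometric]
      norm_num
  · rintro ⟨ψ, hmono, hψ0, hdiv, htend, hC⟩
    set C := ⨆ ν ∈ K, ∫⁻ s, (ψ s : ℝ≥0∞) ∂ν with hCdef
    have hmeas : Measurable ψ := hmono.measurable
    have key : ∀ M : ℝ≥0, 1 ≤ ψ M / M → ∀ ν ∈ K,
        ∫⁻ s in Ioi M, (s:ℝ≥0∞) ∂ν ≤ C * ((ψ M / M : ℝ≥0) : ℝ≥0∞)⁻¹ := by
      intro M hM1 ν hν
      have hMpos : 0 < M := by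
        rcases eq_or_lt_of_le (zero_le : 0 ≤ M) with h0 | h0
        · rw [← h0] at hM1; simp at hM1
        · exact h0
      set c : ℝ≥0 := ψ M / M with hc
      have hc0 : (c:ℝ≥0∞) ≠ 0 := by
        exact_mod_cast ne_of_gt (lt_of_lt_of_le zero_lt_one hM1)
      have hctop : (c:ℝ≥0∞) ≠ ⊤ := ENNReal.coe_ne_top
      have hptwise : ∀ s ∈ Ioi M, (s:ℝ≥0∞) ≤ (ψ s : ℝ≥0∞) * ((c:ℝ≥0∞))⁻¹ := by
        intro s hs
        have hsM : M ≤ s := le_of_lt (mem_Ioi.mp hs)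
        have hs0 : (0:ℝ≥0) < s := lt_of_lt_of_le hMpos hsM
        have h1 : c ≤ ψ s / s := hdiv (mem_Ioi.mpr hMpos) (mem_Ioi.mpr hs0) hsM
        have h2 : s * c ≤ ψ s := by
          calc s * c ≤ s * (ψ s / s) := mul_le_mul_right h1 s
            _ = ψ s := by rw [mul_comm, div_mul_cancel₀ _ (ne_of_gt hs0)]
        have h2' : (s:ℝ≥0∞) * c ≤ (ψ s : ℝ≥0∞) := by exact_mod_cast h2
        rw [mul_comm, ← ENNReal.div_eq_inv_mul]
        exact (ENNReal.le_div_iff_mul_le (Or.inl hc0) (Or.inl hctop)).mpr h2'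
      have hint : ∫⁻ s in Ioi M, (s:ℝ≥0∞) ∂ν
          ≤ (∫⁻ s, (ψ s : ℝ≥0∞) ∂ν) * ((c:ℝ≥0∞))⁻¹ := by
        calc ∫⁻ s in Ioi M, (s:ℝ≥0∞) ∂ν
            ≤ ∫⁻ s in Ioi M, (ψ s : ℝ≥0∞) * ((c:ℝ≥0∞))⁻¹ ∂ν := by
              refine setLIntegral_mono ((ENNReal.continuous_coe.measurable.comp
                hmeas).mul_const _) hptwise
          _ ≤ ∫⁻ s, (ψ s : ℝ≥0∞) * ((c:ℝ≥0∞))⁻¹ ∂ν :=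
              setLIntegral_le_lintegral _ _
          _ = (∫⁻ s, (ψ s : ℝ≥0∞) ∂ν) * ((c:ℝ≥0∞))⁻¹ :=
              lintegral_mul_const _ (ENNReal.continuous_coe.measurable.comp hmeas)
      refine le_trans hint (mul_le_mul_left ?_ _)
      exact le_iSup₂ (f := fun (ν : Measure ℝ≥0) (_ : ν ∈ K) =>
        ∫⁻ s, (ψ s : ℝ≥0∞) ∂ν) ν hν
    have hbound : ∀ᶠ M : ℝ≥0 in atTop,
        (⨆ ν ∈ K, ∫⁻ s in Ioi M, (s:ℝ≥0∞) ∂ν) ≤ C * ((ψ M / M : ℝ≥0) : ℝ≥0∞)⁻¹ := by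
      filter_upwards [htend.eventually_ge_atTop 1] with M hM
      exact iSup₂_le fun ν hν => key M hM ν hν
    have hlim : Tendsto (fun M : ℝ≥0 => C * ((ψ M / M : ℝ≥0) : ℝ≥0∞)⁻¹) atTop (𝓝 0) := by
      have h1 : Tendsto (fun M : ℝ≥0 => ((ψ M / M : ℝ≥0) : ℝ≥0∞)) atTop (𝓝 ⊤) :=
        ENNReal.tendsto_coe_nhds_top.mpr htend
      have h2 : Tendsto (fun M : ℝ≥0 => ((ψ M / M : ℝ≥0) : ℝ≥0∞)⁻¹) atTop (𝓝 0) := by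
        simpa using h1.inv
      simpa using (ENNReal.Tendsto.const_mul h2 (Or.inr hC.ne))
    exact tendsto_of_tendsto_of_tendsto_of_le_of_le' tendsto_const_nhds hlim
      (Eventually.of_forall fun _ => zero_le) hbound
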